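/- If G is a graph of order n whose Seidel matrix is singular, then n ≡ 1 (mod 4). -/
import Mathlib

open Matrix Finset Equiv

section aux

variable {n : ℕ}

lemma seidel_prod_inv (P : Matrix (Fin n) (Fin n) (ZMod 4))
    (hs : ∀ i j, P j i = P i j) (σ : Equiv.Perm (Fin n)) :
    ∏ i, P (σ⁻¹ i) i = ∏ i, P (σ i) i := by
  calc ∏ j, P (σ⁻¹ j) j = ∏ i, P (σ⁻¹ (σ i)) (σ i) := (Equiv.prod_comp σ _).symm
    _ = ∏ i, P i (σ i) := by simp
    _ = ∏ i, P (σ i) i := Finset.prod_congr rfl fun i _ => (hs i (σ i)).symm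

lemma seidel_prod_invol (P : Matrix (Fin n) (Fin n) (ZMod 4))
    (hs : ∀ i j, P j i = P i j) (h2 : ∀ i j, i ≠ j → P i j ^ 2 = 1)
    (σ : Equiv.Perm (Fin n)) (hinv : σ⁻¹ = σ) (hder : ∀ i, σ i ≠ i) :
    ∏ i, P (σ i) i = 1 := by
  have h1 : σ * σ = 1 := by nth_rewrite 2 [← hinv]; simp
  have hσσ : ∀ a, σ (σ a) = a := fun a => by
    rw [← Equiv.Perm.mul_apply, h1, Equiv.Perm.one_apply]
  refine Finset.prod_ninvolution σ (fun a => ?_) (fun a _ => hder a)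
    (fun a => Finset.mem_univ _) (fun a => hσσ a)
  rw [hσσ, ← hs a (σ a), ← sq]
  exact h2 (σ a) a (hder a)

lemma seidel_term_sq (P : Matrix (Fin n) (Fin n) (ZMod 4))
    (h2 : ∀ i j, i ≠ j → P i j ^ 2 = 1)
    (σ : Equiv.Perm (Fin n)) (hder : ∀ i, σ i ≠ i) :
    (((Equiv.Perm.sign σ : ℤ) : ZMod 4) * ∏ i, P (σ i) i) ^ 2 = 1 := by
  rw [mul_pow, ← Finset.prod_pow]
  have h1 : ((Equiv.Perm.sign σ : ℤ) : ZMod 4) ^ 2 = 1 := by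
    have := Int.units_sq (Equiv.Perm.sign σ)
    rw [← Int.cast_pow]
    norm_cast
    rw [this]
    simp
  rw [h1, one_mul, Finset.prod_congr rfl fun i _ => h2 (σ i) i (hder i)]
  simp

lemma zmod4_helper : ∀ x y : ZMod 4, x ^ 2 = 1 → y ^ 2 = 1 → (x - y) + (x - y) = 0 := by
  decide

lemma seidel_det_eq (M N : Matrix (Fin n) (Fin n) (ZMod 4))
    (hMs : ∀ i j, M j i = M i j) (hNs : ∀ i j, N j i = N i j)
    (hMd : ∀ i, M i i = 0) (hNd : ∀ i, N i i = 0)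
    (hM2 : ∀ i j, i ≠ j → M i j ^ 2 = 1) (hN2 : ∀ i j, i ≠ j → N i j ^ 2 = 1) :
    M.det = N.det := by
  rw [det_apply', det_apply', ← sub_eq_zero, ← Finset.sum_sub_distrib]
  set f : Equiv.Perm (Fin n) → ZMod 4 := fun σ =>
    ((Equiv.Perm.sign σ : ℤ) : ZMod 4) * ∏ i, M (σ i) i -
    ((Equiv.Perm.sign σ : ℤ) : ZMod 4) * ∏ i, N (σ i) i with hf
  -- if σ has a fixed point, f σ = 0
  have hfix : ∀ σ : Equiv.Perm (Fin n), (∃ i, σ i = i) → f σ = 0 := by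
    rintro σ ⟨i, hi⟩
    have hM0 : ∏ j, M (σ j) j = 0 :=
      Finset.prod_eq_zero (Finset.mem_univ i) (by rw [hi]; exact hMd i)
    have hN0 : ∏ j, N (σ j) j = 0 :=
      Finset.prod_eq_zero (Finset.mem_univ i) (by rw [hi]; exact hNd i)
    simp [hf, hM0, hN0]
  have hzero : ∀ σ : Equiv.Perm (Fin n), σ⁻¹ = σ → f σ = 0 := by
    intro σ hinv
    by_cases hd : ∃ i, σ i = i
    · exact hfix σ hd
    · push_neg at hd
      simp only [hf]
      rw [seidel_prod_invol M hMs hM2 σ hinv hd, seidel_prod_invol N hNs hN2 σ hinv hd,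
        sub_self]
  refine Finset.sum_involution (fun σ _ => σ⁻¹) (fun σ _ => ?_)
    (fun σ _ hne h => hne (hzero σ h)) (fun σ _ => Finset.mem_univ _) (fun σ _ => inv_inv σ)
  -- f σ + f σ⁻¹ = 0
  show f σ + f σ⁻¹ = 0
  by_cases hd : ∃ i, σ i = i
  · obtain ⟨i, hi⟩ := hd
    have hi' : σ⁻¹ i = i := σ.injective (by simp [hi])
    rw [hfix σ ⟨i, hi⟩, hfix σ⁻¹ ⟨i, hi'⟩, add_zero]
  · push_neg at hd
    have heq : f σ⁻¹ = f σ := by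
      simp only [hf, Equiv.Perm.sign_inv, seidel_prod_inv M hMs σ, seidel_prod_inv N hNs σ]
    rw [heq]
    simp only [hf]
    exact zmod4_helper _ _ (seidel_term_sq M hM2 σ hd) (seidel_term_sq N hN2 σ hd)

end aux

def seidelMatrix {n : ℕ} (G : SimpleGraph (Fin n)) [DecidableRel G.Adj] :
    Matrix (Fin n) (Fin n) ℤ :=
  Matrix.of fun i j => if i = j then 0 else if G.Adj i j then -1 else 1

theorem seidel_singular_order_mod_four {n : ℕ} (G : SimpleGraph (Fin n))
    [DecidableRel G.Adj] (hsing : (seidelMatrix G).det = 0) :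
    n % 4 = 1 := by
  -- cast to ZMod 4
  set M : Matrix (Fin n) (Fin n) (ZMod 4) := (seidelMatrix G).map (Int.cast : ℤ → ZMod 4) with hM
  set N : Matrix (Fin n) (Fin n) (ZMod 4) :=
    Matrix.of (fun i j => if i = j then 0 else 1) with hN
  have hMdet : M.det = 0 := by
    have h := (Int.castRingHom (ZMod 4)).map_det (seidelMatrix G)
    rw [hsing] at h
    simpa [hM] using h.symm
  have hkey : M.det = N.det := by
    apply seidel_det_eq
    · intro i j
      by_cases h : i = j
      · subst h; rfl
      · simp [hM, seidelMatrix, h, Ne.symm h, G.adj_comm]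
    · intro i j
      by_cases h : i = j
      · subst h; rfl
      · simp [hN, h, Ne.symm h]
    · intro i; simp [hM, seidelMatrix]
    · intro i; simp [hN]
    · intro i j h
      by_cases ha : G.Adj i j <;> simp [hM, seidelMatrix, h, ha]
    · intro i j h; simp [hN, h]
  -- compute N.det
  have hNdet : N.det = (-1 : ZMod 4) ^ n * (1 - (n : ZMod 4)) := by
    have : N = -(1 + Matrix.replicateCol Unit (fun _ => (1 : ZMod 4)) * Matrix.replicateRow Unit (fun _ => (-1 : ZMod 4))) := by
      ext i j
      by_cases h : i = j <;>
        simp [hN, h, Matrix.mul_apply, Matrix.one_apply, Matrix.replicateCol, Matrix.replicateRow]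
    rw [this, Matrix.det_neg, Matrix.det_one_add_replicateCol_mul_replicateRow]
    simp [dotProduct]
    ring
  have h0 : (1 : ZMod 4) - (n : ZMod 4) = 0 := by
    have := hkey.symm.trans hMdet
    rw [hNdet] at this
    rcases neg_one_pow_eq_or (ZMod 4) n with h | h <;> rw [h] at this
    · linear_combination this
    · linear_combination -this
  have hn : (n : ZMod 4) = 1 := by linear_combination -h0
  have : ((n % 4 : ℕ) : ZMod 4) = 1 := by rw [ZMod.natCast_mod]; exact hn
  have hlt : n % 4 < 4 := Nat.mod_lt _ (by norm_num)
  have := congrArg ZMod.val this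
  rwa [ZMod.val_cast_of_lt hlt] at this
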